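/- Let A, B be n×n symmetric positive definite real matrices and X an n×n real matrix. The block matrix [[A, X],[Xᵀ, B]] is positive definite if and only if X = A^{1/2} K B^{1/2} for some matrix K with operator norm ‖K‖ < 1. -/

import Mathlib

open Matrix

/-- The operator (spectral) norm of a real matrix, induced by the Euclidean norm. -/
noncomputable def opNorm {n : ℕ} (A : Matrix (Fin n) (Fin n) ℝ) : ℝ :=
  ‖Matrix.toEuclideanCLM (𝕜 := ℝ) (n := Fin n) A‖

/-- The square root of a positive semidefinite matrix, as defined in the older Mathlib
(`Matrix.PosSemidef.sqrt`, since removed). -/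
noncomputable def Matrix.PosSemidef.sqrt {n : Type*} [Fintype n] [DecidableEq n]
    {A : Matrix n n ℝ} (hA : A.PosSemidef) : Matrix n n ℝ :=
  hA.1.eigenvectorUnitary.1 * diagonal ((↑) ∘ (√·) ∘ hA.1.eigenvalues) *
    (star hA.1.eigenvectorUnitary : Matrix n n ℝ)

lemma Matrix.PosSemidef.posSemidef_sqrt {n : Type*} [Fintype n] [DecidableEq n]
    {A : Matrix n n ℝ} (hA : A.PosSemidef) : hA.sqrt.PosSemidef := by
  unfold Matrix.PosSemidef.sqrt
  have hD : (diagonal ((↑) ∘ (√·) ∘ hA.1.eigenvalues) : Matrix n n ℝ).PosSemidef :=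
    Matrix.posSemidef_diagonal_iff.mpr fun i => by simp [Real.sqrt_nonneg]
  have := hD.mul_mul_conjTranspose_same (hA.1.eigenvectorUnitary.1)
  simpa [Matrix.star_eq_conjTranspose] using this

lemma Matrix.PosSemidef.sqrt_mul_self {n : Type*} [Fintype n] [DecidableEq n]
    {A : Matrix n n ℝ} (hA : A.PosSemidef) : hA.sqrt * hA.sqrt = A := by
  unfold Matrix.PosSemidef.sqrt
  conv_rhs => rw [hA.1.spectral_theorem, Unitary.conjStarAlgAut_apply]
  have hU : (star hA.1.eigenvectorUnitary : Matrix n n ℝ) * hA.1.eigenvectorUnitary.1 = 1 :=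
    Unitary.coe_star_mul_self _
  calc _ = hA.1.eigenvectorUnitary.1 * (diagonal ((↑) ∘ (√·) ∘ hA.1.eigenvalues) *
        ((star hA.1.eigenvectorUnitary : Matrix n n ℝ) * hA.1.eigenvectorUnitary.1) *
        diagonal ((↑) ∘ (√·) ∘ hA.1.eigenvalues)) *
        (star hA.1.eigenvectorUnitary : Matrix n n ℝ) := by simp only [Matrix.mul_assoc]
    _ = _ := by
      rw [hU, Matrix.mul_one, diagonal_mul_diagonal]
      congr 3
      funext i
      simp [Real.mul_self_sqrt (hA.eigenvalues_nonneg i)]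

section helpers

variable {m l : Type*} [Fintype m] [DecidableEq m] [Fintype l] [DecidableEq l]

lemma mulVec_ne_zero_of_isUnit {N : Matrix m m ℝ} (hN : IsUnit N) {x : m → ℝ} (hx : x ≠ 0) :
    N *ᵥ x ≠ 0 := by
  intro h
  exact hx (Matrix.mulVec_injective_iff_isUnit.mpr hN (by simpa using h))

lemma posDef_conj {M N : Matrix m m ℝ} (hM : M.PosDef) (hN : IsUnit N) :
    (Nᵀ * M * N).PosDef := by
  refine Matrix.PosDef.of_dotProduct_mulVec_pos ?_ (fun x hx => ?_)
  · have := Matrix.isHermitian_conjTranspose_mul_mul N hM.1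
    rwa [Matrix.conjTranspose_eq_transpose_of_trivial] at this
  · have h1 : star x ⬝ᵥ ((Nᵀ * M * N) *ᵥ x) = star (N *ᵥ x) ⬝ᵥ (M *ᵥ (N *ᵥ x)) := by
      rw [star_trivial, star_trivial, ← Matrix.mulVec_mulVec, ← Matrix.mulVec_mulVec,
        Matrix.dotProduct_mulVec _ Nᵀ, Matrix.vecMul_transpose]
    rw [h1]
    exact hM.dotProduct_mulVec_pos (mulVec_ne_zero_of_isUnit hN hx)

lemma posDef_of_posSemidef_sq {S : Matrix m m ℝ} (hS : S.PosSemidef) (h : (S * S).PosDef) :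
    S.PosDef := by
  obtain ⟨B, hB⟩ : ∃ B : Matrix m m ℝ, S = Bᴴ * B :=
    ⟨hS.sqrt, by rw [hS.posSemidef_sqrt.1.eq, hS.sqrt_mul_self]⟩
  refine Matrix.PosDef.of_dotProduct_mulVec_pos hS.1 (fun x hx => ?_)
  have hSx : S *ᵥ x ≠ 0 := by
    intro h0
    have := h.dotProduct_mulVec_pos hx
    rw [← Matrix.mulVec_mulVec, h0, Matrix.mulVec_zero, dotProduct_zero] at this
    exact lt_irrefl 0 this
  have hBx : B *ᵥ x ≠ 0 := by
    intro h0
    apply hSx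
    rw [hB, ← Matrix.mulVec_mulVec, h0, Matrix.mulVec_zero]
  have : star x ⬝ᵥ (S *ᵥ x) = star (B *ᵥ x) ⬝ᵥ (B *ᵥ x) := by
    rw [hB, ← Matrix.mulVec_mulVec, Matrix.dotProduct_mulVec _ Bᴴ, star_trivial,
      Matrix.conjTranspose_eq_transpose_of_trivial, Matrix.vecMul_transpose, star_trivial]
  rw [this]
  exact dotProduct_star_self_pos_iff.mpr hBx

lemma posDef_fromBlocks₁₁ {A : Matrix m m ℝ} (B : Matrix m l ℝ) (D : Matrix l l ℝ)
    (hA : A.PosDef) [Invertible A] :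
    (Matrix.fromBlocks A B Bᴴ D).PosDef ↔ (D - Bᴴ * A⁻¹ * B).PosDef := by
  rw [Matrix.posDef_iff_dotProduct_mulVec, Matrix.posDef_iff_dotProduct_mulVec,
    Matrix.IsHermitian.fromBlocks₁₁ _ _ hA.1]
  constructor
  · refine fun h => ⟨h.1, fun x hx => ?_⟩
    have hv : (-((A⁻¹ * B) *ᵥ x) ⊕ᵥ x) ≠ 0 := by
      intro h0
      apply hx
      funext i
      exact congrFun h0 (Sum.inr i)
    have := h.2 hv
    rw [Matrix.dotProduct_mulVec, Matrix.schur_complement_eq₁₁ B D _ _ hA.1, neg_add_cancel,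
      dotProduct_zero, zero_add] at this
    rw [Matrix.dotProduct_mulVec]
    exact this
  · refine fun h => ⟨h.1, fun x hx => ?_⟩
    rw [Matrix.dotProduct_mulVec, ← Sum.elim_comp_inl_inr x,
      Matrix.schur_complement_eq₁₁ B D _ _ hA.1]
    by_cases hy : x ∘ Sum.inr = 0
    · have hinl : x ∘ Sum.inl ≠ 0 := by
        intro h0
        apply hx
        funext i
        cases i with
        | inl i => exact congrFun h0 i
        | inr i => exact congrFun hy i
      rw [hy]
      simp only [Matrix.mulVec_zero, add_zero, star_zero, Matrix.zero_vecMul,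
        zero_dotProduct, dotProduct_zero]
      rw [← Matrix.dotProduct_mulVec]
      exact hA.dotProduct_mulVec_pos hinl
    · apply add_pos_of_nonneg_of_pos
      · rw [← Matrix.dotProduct_mulVec]
        exact hA.posSemidef.dotProduct_mulVec_nonneg _
      · rw [← Matrix.dotProduct_mulVec]
        exact h.2 hy

end helpers

lemma opNorm_lt_one_iff {n : ℕ} (K : Matrix (Fin n) (Fin n) ℝ) :
    opNorm K < 1 ↔ (1 - Kᵀ * K).PosDef := by
  set f := Matrix.toEuclideanCLM (𝕜 := ℝ) (n := Fin n) K with hf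
  have hnorm : ∀ v : Fin n → ℝ, ‖(WithLp.equiv 2 (Fin n → ℝ)).symm v‖ ^ 2 = v ⬝ᵥ v := by
    intro v
    rw [EuclideanSpace.norm_eq, Real.sq_sqrt (by positivity)]
    simp [dotProduct, sq, Real.norm_eq_abs, abs_mul_abs_self]
  have happly : ∀ v : Fin n → ℝ,
      f ((WithLp.equiv 2 (Fin n → ℝ)).symm v) = (WithLp.equiv 2 (Fin n → ℝ)).symm (K *ᵥ v) :=
    fun v => Matrix.toEuclideanCLM_toLp K v
  have hval : ∀ v : Fin n → ℝ,
      v ⬝ᵥ ((1 - Kᵀ * K) *ᵥ v) = v ⬝ᵥ v - (K *ᵥ v) ⬝ᵥ (K *ᵥ v) := by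
    intro v
    rw [Matrix.sub_mulVec, Matrix.one_mulVec, dotProduct_sub]
    congr 1
    rw [← Matrix.mulVec_mulVec, Matrix.dotProduct_mulVec _ Kᵀ, Matrix.vecMul_transpose]
  constructor
  · intro hK
    refine Matrix.PosDef.of_dotProduct_mulVec_pos ?_ (fun v hv => ?_)
    · have := Matrix.isHermitian_conjTranspose_mul_self K
      rw [Matrix.conjTranspose_eq_transpose_of_trivial] at this
      exact Matrix.isHermitian_one.sub this
    · rw [star_trivial, hval]
      set x := (WithLp.equiv 2 (Fin n → ℝ)).symm v with hx
      have hxne : x ≠ 0 := by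
        intro h0
        exact hv (by simpa [hx] using congrArg (WithLp.equiv 2 (Fin n → ℝ)) h0)
      have h1 : ‖f x‖ < ‖x‖ := by
        calc ‖f x‖ ≤ ‖f‖ * ‖x‖ := f.le_opNorm x
        _ < 1 * ‖x‖ := by
            apply mul_lt_mul_of_pos_right hK
            exact norm_pos_iff.mpr hxne
        _ = ‖x‖ := one_mul _
      have h2 : ‖f x‖ ^ 2 < ‖x‖ ^ 2 := by
        apply pow_lt_pow_left₀ h1 (norm_nonneg _) two_ne_zero
      rw [hx, happly, hnorm, hnorm] at h2
      linarith
  · intro h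
    have key : ∀ x : EuclideanSpace ℝ (Fin n), x ≠ 0 → ‖f x‖ < ‖x‖ := by
      intro x hx
      set v := WithLp.equiv 2 (Fin n → ℝ) x with hv
      have hvne : v ≠ 0 := by
        intro h0
        exact hx (by simpa [hv] using congrArg (WithLp.equiv 2 (Fin n → ℝ)).symm h0)
      have := h.dotProduct_mulVec_pos hvne
      rw [star_trivial, hval] at this
      have hxv : x = (WithLp.equiv 2 (Fin n → ℝ)).symm v := by simp [hv]
      have h2 : ‖f x‖ ^ 2 < ‖x‖ ^ 2 := by
        rw [hxv, happly, hnorm, hnorm]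
        linarith
      exact lt_of_pow_lt_pow_left₀ 2 (norm_nonneg _) h2
    rcases Nat.eq_zero_or_pos n with hn | hn
    · have hle : opNorm K ≤ 0 := by
        apply ContinuousLinearMap.opNorm_le_bound _ le_rfl
        intro x
        have hx0 : x = 0 := by
          subst hn
          apply (WithLp.equiv 2 (Fin 0 → ℝ)).injective
          funext i
          exact i.elim0
        simp [hx0]
      exact lt_of_le_of_lt hle one_pos
    · haveI : Nontrivial (EuclideanSpace ℝ (Fin n)) := by
        refine nontrivial_of_ne (EuclideanSpace.single ⟨0, hn⟩ (1 : ℝ)) 0 ?_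
        intro hcon
        have := congrArg norm hcon
        rw [EuclideanSpace.norm_single] at this
        simp at this
      obtain ⟨x₀, hx₀mem, hmax⟩ := (isCompact_sphere (0 : EuclideanSpace ℝ (Fin n)) 1).exists_isMaxOn
        (NormedSpace.sphere_nonempty.mpr zero_le_one)
        ((continuous_norm.comp f.continuous).continuousOn)
      have hx₀norm : ‖x₀‖ = 1 := mem_sphere_zero_iff_norm.mp hx₀mem
      have hx₀ne : x₀ ≠ 0 := by
        intro h0
        rw [h0, norm_zero] at hx₀norm
        exact one_ne_zero hx₀norm.symm
      have hM : ‖f x₀‖ < 1 := by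
        have := key x₀ hx₀ne
        rwa [hx₀norm] at this
      have hle : opNorm K ≤ ‖f x₀‖ := by
        apply ContinuousLinearMap.opNorm_le_of_unit_norm (norm_nonneg _)
        intro x hx
        exact hmax (mem_sphere_zero_iff_norm.mpr hx)
      exact lt_of_le_of_lt hle hM

theorem blockMatrix_posDef_iff (n : ℕ) (A B X : Matrix (Fin n) (Fin n) ℝ)
    (hA : A.PosDef) (hB : B.PosDef) :
    (Matrix.fromBlocks A X Xᵀ B).PosDef ↔
      ∃ K : Matrix (Fin n) (Fin n) ℝ, opNorm K < 1 ∧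
        X = hA.posSemidef.sqrt * K * hB.posSemidef.sqrt := by
  set S := hA.posSemidef.sqrt with hSdef
  set T := hB.posSemidef.sqrt with hTdef
  have hSS : S * S = A := hA.posSemidef.sqrt_mul_self
  have hTT : T * T = B := hB.posSemidef.sqrt_mul_self
  have hSpd : S.PosDef := posDef_of_posSemidef_sq hA.posSemidef.posSemidef_sqrt (hSS ▸ hA)
  have hTpd : T.PosDef := posDef_of_posSemidef_sq hB.posSemidef.posSemidef_sqrt (hTT ▸ hB)
  have hSu : IsUnit S := hSpd.isUnit
  have hTu : IsUnit T := hTpd.isUnit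
  have hSdet : IsUnit S.det := (Matrix.isUnit_iff_isUnit_det S).mp hSu
  have hTdet : IsUnit T.det := (Matrix.isUnit_iff_isUnit_det T).mp hTu
  have hSt : Sᵀ = S := by
    rw [← Matrix.conjTranspose_eq_transpose_of_trivial]; exact hSpd.1
  have hTt : Tᵀ = T := by
    rw [← Matrix.conjTranspose_eq_transpose_of_trivial]; exact hTpd.1
  have hTit : (T⁻¹)ᵀ = T⁻¹ := by rw [Matrix.transpose_nonsing_inv, hTt]
  have hAinv : A⁻¹ = S⁻¹ * S⁻¹ := by rw [← hSS, Matrix.mul_inv_rev]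
  haveI : Invertible A := hA.isUnit.invertible
  have hXH : Xᵀ = Xᴴ := (Matrix.conjTranspose_eq_transpose_of_trivial X).symm
  rw [hXH, posDef_fromBlocks₁₁ X B hA]
  have ID : ∀ K : Matrix (Fin n) (Fin n) ℝ,
      B - (S * K * T)ᴴ * A⁻¹ * (S * K * T) = Tᵀ * (1 - Kᵀ * K) * T := by
    intro K
    rw [Matrix.conjTranspose_eq_transpose_of_trivial, hAinv, ← hTT]
    simp only [Matrix.transpose_mul, hSt, hTt, Matrix.mul_sub, Matrix.sub_mul,
      Matrix.mul_one, Matrix.one_mul, Matrix.mul_assoc]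
    congr 1
    rw [Matrix.mul_nonsing_inv_cancel_left _ _ hSdet, Matrix.nonsing_inv_mul_cancel_left _ _ hSdet]
  constructor
  · intro h
    refine ⟨S⁻¹ * X * T⁻¹, ?_, ?_⟩
    · rw [opNorm_lt_one_iff]
      have hXeq : X = S * (S⁻¹ * X * T⁻¹) * T := by
        simp only [Matrix.mul_assoc]
        rw [Matrix.nonsing_inv_mul _ hTdet, Matrix.mul_one,
          Matrix.mul_nonsing_inv_cancel_left _ _ hSdet]
      rw [hXeq, ID] at h
      have h2 := posDef_conj h (Matrix.isUnit_nonsing_inv_iff.mpr hTu)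
      have cancel : (T⁻¹)ᵀ * (Tᵀ * (1 - (S⁻¹ * X * T⁻¹)ᵀ * (S⁻¹ * X * T⁻¹)) * T) * T⁻¹
          = 1 - (S⁻¹ * X * T⁻¹)ᵀ * (S⁻¹ * X * T⁻¹) := by
        rw [hTit, hTt]
        simp only [Matrix.mul_assoc]
        rw [Matrix.mul_nonsing_inv _ hTdet, Matrix.mul_one,
          Matrix.nonsing_inv_mul_cancel_left _ _ hTdet]
      rwa [cancel] at h2
    · simp only [Matrix.mul_assoc]
      rw [Matrix.nonsing_inv_mul _ hTdet, Matrix.mul_one,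
        Matrix.mul_nonsing_inv_cancel_left _ _ hSdet]
  · rintro ⟨K, hK, rfl⟩
    rw [ID]
    exact posDef_conj ((opNorm_lt_one_iff K).mp hK) hTu
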